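/- Let k ≥ 4 and let η_k, η_{k+1} be the unique zeros of Φ_k in (π/k, π/(k-1)) and of Φ_{k+1} in (π/(k+1), π/k), respectively. Then for all η ∈ [η_{k+1}, η_k) and all integers j ≥ k, Θ_j(η) := (1-|a|⁴) sin η + |a|^{j+1} sin(jη) > 0, where |a| = 1/(2cos η). -/

import Mathlib

open Real Set

private lemma aux_two_mul_le_two_pow (m : ℕ) (h : 1 ≤ m) : 2 * m ≤ 2 ^ m := by
  induction m with
  | zero => omega
  | succ n ih =>
    rcases Nat.eq_or_lt_of_le h with h1 | h1
    · have hn0 : n = 0 := by omega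
      subst hn0; norm_num
    · have h2 := ih (by omega)
      have h3 : 2 ≤ 2 ^ n := Nat.one_lt_two_pow (by omega)
      calc 2 * (n + 1) = 2 * n + 2 := by ring
        _ ≤ 2 ^ n + 2 ^ n := by omega
        _ = 2 ^ (n + 1) := by ring

private lemma aux_cubic (u : ℝ) (h0 : 0 < u) (h1 : 1/8 < u^2) (h2 : u < 0.6546) :
    1 < 16*u^2*(1-u) := by
  nlinarith [sq_nonneg (u - 1/2), sq_nonneg u, mul_pos h0 h0]

private lemma aux_cos4 (η : ℝ) (h1 : π/4 < η) (h2 : η < π/3)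
    (heq : (1 - (1/(2*Real.cos η)) ^ 4) * Real.sin (3 * η)
      - (1/(2*Real.cos η)) ^ 3 * Real.sin (2 * η) + (1/(2*Real.cos η)) ^ 4 * Real.sin η = 0) :
    Real.cos η ^ 4 = 1/8 := by
  have hπ := Real.pi_pos
  have hη0 : 0 < η := lt_trans (by positivity) h1
  have hηπ : η < π := by nlinarith
  have hs : 0 < Real.sin η := Real.sin_pos_of_pos_of_lt_pi hη0 hηπ
  have hc : 1/2 < Real.cos η := by
    have := Real.cos_lt_cos_of_nonneg_of_le_pi (le_of_lt hη0) (by linarith) h2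
    rwa [Real.cos_pi_div_three] at this
  have hc0 : Real.cos η ≠ 0 := by linarith
  set c := Real.cos η
  set s := Real.sin η
  have hs2 : s^2 = 1 - c^2 := by
    have := Real.sin_sq_add_cos_sq η; linarith
  rw [Real.sin_three_mul, Real.sin_two_mul] at heq
  field_simp at heq
  have hfac0 : ((4*c^2 - 1) * ((16*c^4 - 2) * s)) * (128*c^7) = 0 := by
    linear_combination 128*c^7*heq + 512*s*(16*c^4-1)*c^7*hs2
  have hfac : (4*c^2 - 1) * ((16*c^4 - 2) * s) = 0 := by
    rcases mul_eq_zero.mp hfac0 with h | h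
    · exact h
    · exfalso; nlinarith [pow_pos (show (0:ℝ) < c by linarith) 7]
  have h41 : 4*c^2 - 1 ≠ 0 := by nlinarith
  have hsne : s ≠ 0 := ne_of_gt hs
  have : (16*c^4 - 2) * s = 0 := by
    rcases mul_eq_zero.mp hfac with h | h
    · exact absurd h h41
    · exact h
  rcases mul_eq_zero.mp this with h | h
  · linarith
  · exact absurd h hsne

private lemma aux_j4 (c s Aη X : ℝ) (hc0 : 0 < c) (hs0 : 0 < s) (hc18 : 1/8 < c^4)
    (hc12 : 1/2 < c) (hA : Aη = 1/(2*c)) (hX : X = 4*s*c*(2*c^2 - 1)) :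
    0 < (1 - Aη ^ 4) * s + Aη ^ (4+1) * X := by
  have hkey2 : ((1 - Aη ^ 4) * s + Aη ^ (4+1) * X) * (32*c^5)
      = 2*s*c*(16*c^4 + 4*c^2 - 3) := by
    rw [hA, hX]; norm_num; field_simp; ring
  have hrhs : 0 < 2*s*c*(16*c^4 + 4*c^2 - 3) := by
    apply mul_pos (by positivity); nlinarith
  nlinarith [hkey2, hrhs, pow_pos hc0 5]

private lemma aux_jge5 (c s Aη X : ℝ) (j : ℕ) (hj : 5 ≤ j) (hc0 : 0 < c) (hs0 : 0 < s)
    (hc18 : 1/8 < c^4) (hc12 : 1/2 < c) (hkey : 1 < 4*c^2*s) (hA : Aη = 1/(2*c))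
    (hX : -1 ≤ X) :
    0 < (1 - Aη ^ 4) * s + Aη ^ (j+1) * X := by
  have hApos : 0 < Aη := by rw [hA]; positivity
  have hA2 : Aη ^ 2 = 1/(4*c^2) := by rw [hA]; field_simp; ring
  have hA4 : Aη ^ 4 = 1/(16*c^4) := by rw [hA]; field_simp; ring
  have hA4lt : Aη ^ 4 < 1/2 := by
    rw [hA4, div_lt_div_iff₀ (by positivity) (by norm_num)]; nlinarith
  have hA2s : Aη ^ 2 < s := by
    rw [hA2, div_lt_iff₀ (by positivity)]; nlinarith
  have hAlt1 : Aη < 1 := by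
    rw [hA, div_lt_one (by positivity)]; linarith
  have hAj : Aη ^ (j+1) ≤ Aη ^ 6 :=
    pow_le_pow_of_le_one (le_of_lt hApos) (le_of_lt hAlt1) (by omega)
  have hA6 : Aη ^ 6 < (1/2) * s := by
    have h66 : Aη ^ 6 = Aη ^ 4 * Aη ^ 2 := by ring
    have h2p : 0 < Aη ^ 2 := by positivity
    nlinarith
  have hprod : Aη ^ (j+1) * (-1) ≤ Aη ^ (j+1) * X :=
    mul_le_mul_of_nonneg_left hX (by positivity)
  have hms : (1/2) * s < (1 - Aη ^ 4) * s := by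
    apply mul_lt_mul_of_pos_right _ hs0
    linarith
  nlinarith

private lemma aux_large (c s Aη X : ℝ) (k j m : ℕ) (hk5 : 5 ≤ k) (hjk : k ≤ j)
    (hm : m = (k+1)/2) (hc0 : 0 < c) (hs0 : 0 < s) (hc2 : 1/2 < c^2)
    (hslb : 2/((k:ℝ)+1) < s) (hA : Aη = 1/(2*c)) (hX : -1 ≤ X) :
    0 < (1 - Aη ^ 4) * s + Aη ^ (j+1) * X := by
  have hApos : 0 < Aη := by rw [hA]; positivity
  have hA2 : Aη ^ 2 = 1/(4*c^2) := by rw [hA]; field_simp; ring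
  have hA2lt : Aη ^ 2 < 1/2 := by
    rw [hA2, div_lt_div_iff₀ (by positivity) (by norm_num)]; nlinarith
  have hA4lt : Aη ^ 4 < 1/4 := by
    have h44 : Aη ^ 4 = (Aη ^ 2)^2 := by ring
    rw [h44]; nlinarith [sq_nonneg (Aη ^ 2)]
  have hAlt1 : Aη < 1 := by nlinarith
  have hm3 : 3 ≤ m := by omega
  have hAj : Aη ^ (j+1) ≤ (1/2:ℝ)^m := by
    calc Aη ^ (j+1) ≤ Aη ^ (2*m) :=
          pow_le_pow_of_le_one (le_of_lt hApos) (le_of_lt hAlt1) (by omega)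
      _ = (Aη ^ 2)^m := by rw [← pow_mul]
      _ ≤ (1/2:ℝ)^m := pow_le_pow_left₀ (sq_nonneg _) (le_of_lt hA2lt) m
  have hnat : 2*(k+1) ≤ 3*2^m := by
    have := aux_two_mul_le_two_pow m (by omega)
    omega
  have hpow : (1/2:ℝ)^m ≤ 3/(2*((k:ℝ)+1)) := by
    have hcast : (2:ℝ)*((k:ℝ)+1) ≤ 3*(2:ℝ)^m := by
      have h2 : ((2*(k+1) : ℕ) : ℝ) ≤ ((3*2^m : ℕ) : ℝ) := by exact_mod_cast hnat
      push_cast at h2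
      linarith
    rw [div_pow, one_pow, div_le_div_iff₀ (by positivity) (by positivity)]
    linarith
  have hprod : Aη ^ (j+1) * (-1) ≤ Aη ^ (j+1) * X :=
    mul_le_mul_of_nonneg_left hX (by positivity)
  have hms : (3/4) * s < (1 - Aη ^ 4) * s := by
    apply mul_lt_mul_of_pos_right _ hs0
    linarith
  have hfin : 3/(2*((k:ℝ)+1)) < (3/4) * s := by
    have h5 : (3/4) * (2/((k:ℝ)+1)) < (3/4) * s :=
      mul_lt_mul_of_pos_left hslb (by norm_num)
    have heq2 : (3/4) * (2/((k:ℝ)+1)) = 3/(2*((k:ℝ)+1)) := by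
      field_simp; ring
    linarith
  linarith

set_option maxHeartbeats 1000000 in
theorem stmt13 (k : ℕ) (hk : 4 ≤ k) (A : ℝ → ℝ)
    (hA : ∀ η, A η = 1 / (2 * Real.cos η))
    (Φ : ℕ → ℝ → ℝ)
    (hΦ : ∀ j η, Φ j η = (1 - A η ^ 4) * Real.sin (((j : ℝ) - 1) * η)
      - A η ^ 3 * Real.sin (((j : ℝ) - 2) * η) + A η ^ j * Real.sin η)
    (ηk : ℝ) (hηk : ηk ∈ Set.Ioo (π / k) (π / ((k : ℝ) - 1)) ∧ Φ k ηk = 0)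
    (ηk1 : ℝ) (hηk1 : ηk1 ∈ Set.Ioo (π / (k + 1)) (π / k) ∧ Φ (k + 1) ηk1 = 0) :
    ∀ η : ℝ, ηk1 ≤ η → η < ηk → ∀ j : ℕ, k ≤ j →
      0 < (1 - A η ^ 4) * Real.sin η + A η ^ (j + 1) * Real.sin (j * η) := by
  intro η hge hlt j hj
  have hπ := Real.pi_pos
  have hkR : (4:ℝ) ≤ (k:ℝ) := by exact_mod_cast hk
  have hlow : π / ((k:ℝ) + 1) < η := lt_of_lt_of_le hηk1.1.1 hge
  have hhigh : η < π / ((k:ℝ) - 1) := lt_trans hlt hηk.1.2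
  have hη0 : 0 < η := lt_trans (by positivity) hlow
  have hsj : -1 ≤ Real.sin ((j:ℝ) * η) := Real.neg_one_le_sin _
  rcases Nat.eq_or_lt_of_le hk with h4 | h5
  · -- case k = 4
    obtain rfl : k = 4 := h4.symm
    have hηk14 : π/4 < ηk := by
      have h := hηk.1.1; norm_num at h; convert h using 2
    have hηk3 : ηk < π/3 := by
      have h := hηk.1.2; norm_num at h; convert h using 2
    have heq : (1 - (1/(2*Real.cos ηk)) ^ 4) * Real.sin (3 * ηk)
        - (1/(2*Real.cos ηk)) ^ 3 * Real.sin (2 * ηk) + (1/(2*Real.cos ηk)) ^ 4 * Real.sin ηk = 0 := by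
      have h0 := hηk.2
      rw [hΦ] at h0
      rw [hA] at h0
      norm_num at h0
      convert h0 using 4 <;> norm_num
    have hc4 : Real.cos ηk ^ 4 = 1/8 := aux_cos4 ηk hηk14 hηk3 heq
    have hc4pos : 1/2 < Real.cos ηk := by
      have h0 : 0 < Real.cos ηk := by
        apply Real.cos_pos_of_mem_Ioo
        constructor <;> nlinarith
      by_contra hcon
      push_neg at hcon
      have h2 : Real.cos ηk ^ 2 ≤ 1/4 := by nlinarith
      have h4' : Real.cos ηk ^ 4 ≤ 1/16 := by
        nlinarith [sq_nonneg (Real.cos ηk ^ 2), sq_nonneg (Real.cos ηk ^ 2 - 1/4)]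
      rw [hc4] at h4'; norm_num at h4'
    have hcc : Real.cos ηk < Real.cos η :=
      Real.cos_lt_cos_of_nonneg_of_le_pi (le_of_lt hη0) (by nlinarith) hlt
    have hc12 : 1/2 < Real.cos η := lt_trans hc4pos hcc
    have hc0 : 0 < Real.cos η := by linarith
    have hc18 : 1/8 < Real.cos η ^ 4 := by
      rw [← hc4]
      exact pow_lt_pow_left₀ hcc (by linarith) (by norm_num)
    have hη5 : π/5 < η := by
      have h := hlow; norm_num at h; convert h using 2
    have hcub : Real.cos η < (1 + Real.sqrt 5)/4 := by
      rw [← Real.cos_pi_div_five]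
      exact Real.cos_lt_cos_of_nonneg_of_le_pi (by positivity) (by nlinarith) hη5
    have hsqrt5 : Real.sqrt 5 < 2.23607 := by
      nlinarith [Real.sq_sqrt (by norm_num : (5:ℝ) ≥ 0), Real.sqrt_nonneg 5]
    have hc2u : Real.cos η ^ 2 < 0.6546 := by nlinarith
    have hs0 : 0 < Real.sin η := Real.sin_pos_of_pos_of_lt_pi hη0 (by nlinarith)
    have hs2 : Real.sin η ^ 2 = 1 - Real.cos η ^ 2 := by
      have := Real.sin_sq_add_cos_sq η; linarith
    have hkey : 1 < 4 * Real.cos η ^ 2 * Real.sin η := by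
      have h1 : 1 < 16*(Real.cos η ^ 2)^2*(1 - Real.cos η ^ 2) :=
        aux_cubic (Real.cos η ^ 2) (by positivity) (by nlinarith) hc2u
      have ht2 : 1 < (4 * Real.cos η ^ 2 * Real.sin η)^2 := by
        have hexp : (4 * Real.cos η ^ 2 * Real.sin η)^2
            = 16*(Real.cos η ^ 2)^2*(1 - Real.cos η ^ 2) := by
          linear_combination 16*(Real.cos η ^ 2)^2*hs2
        rw [hexp]; exact h1
      have ht0 : 0 < 4 * Real.cos η ^ 2 * Real.sin η := by positivity
      nlinarith
    rcases Nat.eq_or_lt_of_le hj with hj4 | hj5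
    · -- j = 4
      obtain rfl : j = 4 := hj4.symm
      have hs4 : Real.sin (((4:ℕ):ℝ) * η)
          = 4*Real.sin η*Real.cos η*(2*Real.cos η ^2 - 1) := by
        have h44 : ((4:ℕ):ℝ) * η = 2*(2*η) := by push_cast; ring
        rw [h44, Real.sin_two_mul, Real.sin_two_mul, Real.cos_two_mul]
        ring
      rw [hs4]
      exact aux_j4 (Real.cos η) (Real.sin η) (A η) _ hc0 hs0 hc18 hc12 (hA η) rfl
    · -- j ≥ 5
      exact aux_jge5 (Real.cos η) (Real.sin η) (A η) _ j (by omega) hc0 hs0 hc18 hc12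
        hkey (hA η) hsj
  · -- case k ≥ 5
    have hk5 : 5 ≤ k := h5
    have hkR5 : (5:ℝ) ≤ (k:ℝ) := by exact_mod_cast hk5
    have hη4 : η < π/4 := by
      apply lt_of_lt_of_le hhigh
      rw [div_le_div_iff₀ (by linarith) (by norm_num)]
      nlinarith
    have hcc : Real.cos (π/4) < Real.cos η :=
      Real.cos_lt_cos_of_nonneg_of_le_pi (le_of_lt hη0) (by linarith) hη4
    rw [Real.cos_pi_div_four] at hcc
    have hsqrt2 : Real.sqrt 2 ^ 2 = 2 := Real.sq_sqrt (by norm_num)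
    have hc2 : 1/2 < Real.cos η ^ 2 := by nlinarith [Real.sqrt_nonneg 2]
    have hc0 : 0 < Real.cos η := lt_of_lt_of_le (by positivity) (le_of_lt hcc)
    have hs0 : 0 < Real.sin η := Real.sin_pos_of_pos_of_lt_pi hη0 (by nlinarith)
    have hslb : 2/((k:ℝ)+1) < Real.sin η := by
      have h1 : Real.sin (π/((k:ℝ)+1)) < Real.sin η :=
        Real.sin_lt_sin_of_lt_of_le_pi_div_two
          (le_trans (by linarith : -(π/2) ≤ (0:ℝ)) (le_of_lt (by positivity))) (by linarith) hlow
      have h2 : 2/π * (π/((k:ℝ)+1)) ≤ Real.sin (π/((k:ℝ)+1)) := by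
        apply Real.mul_le_sin (by positivity)
        rw [div_le_div_iff₀ (by linarith) (by norm_num)]
        nlinarith
      have h3 : 2/π * (π/((k:ℝ)+1)) = 2/((k:ℝ)+1) := by
        field_simp
      linarith
    exact aux_large (Real.cos η) (Real.sin η) (A η) _ k j ((k+1)/2) hk5 hj rfl
      hc0 hs0 hc2 hslb (hA η) hsj
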